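/- For every real parameter a and every function f : ℝ → ℝ, the function H_a is a first integral of the vortex-plug field V_{a,f}: for every point p ∈ ℝ³, the Fréchet derivative of H_a at p applied to the vector V_{a,f}(p) equals 0. -/

import Mathlib

/-- `H_a(x,y,z) = (x² + y²)(x² + y² + z² + a)`. -/
noncomputable def Ha3 (a : ℝ) : ℝ × ℝ × ℝ → ℝ :=
  fun p => (p.1 ^ 2 + p.2.1 ^ 2) * (p.1 ^ 2 + p.2.1 ^ 2 + p.2.2 ^ 2 + a)

/-- The vortex-plug vector field
`V_{a,f}(x,y,z) = (−2xz − f(H_a)·y, −2yz + f(H_a)·x, 2(2(x²+y²)+z²+a))`. -/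
noncomputable def Vaf (a : ℝ) (f : ℝ → ℝ) : ℝ × ℝ × ℝ → ℝ × ℝ × ℝ :=
  fun p =>
    (-2 * p.1 * p.2.2 - f (Ha3 a p) * p.2.1,
      -2 * p.2.1 * p.2.2 + f (Ha3 a p) * p.1,
      2 * (2 * (p.1 ^ 2 + p.2.1 ^ 2) + p.2.2 ^ 2 + a))

/-- For every `a` and every function `f`, the function `H_a` is a first integral of the
vortex-plug field `V_{a,f}`: the Fréchet derivative of `H_a` at any point applied to
`V_{a,f}` at that point vanishes. -/
theorem stmt8 (a : ℝ) (f : ℝ → ℝ) (p : ℝ × ℝ × ℝ) :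
    fderiv ℝ (Ha3 a) p (Vaf a f p) = 0 := by
  have hx : HasFDerivAt (fun q : ℝ × ℝ × ℝ => q.1)
      (ContinuousLinearMap.fst ℝ ℝ (ℝ × ℝ)) p := hasFDerivAt_fst
  have hy : HasFDerivAt (fun q : ℝ × ℝ × ℝ => q.2.1)
      ((ContinuousLinearMap.fst ℝ ℝ ℝ).comp (ContinuousLinearMap.snd ℝ ℝ (ℝ × ℝ))) p :=
    hasFDerivAt_fst.comp p hasFDerivAt_snd
  have hz : HasFDerivAt (fun q : ℝ × ℝ × ℝ => q.2.2)
      ((ContinuousLinearMap.snd ℝ ℝ ℝ).comp (ContinuousLinearMap.snd ℝ ℝ (ℝ × ℝ))) p :=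
    hasFDerivAt_snd.comp p hasFDerivAt_snd
  have hg := (hx.mul hx).add (hy.mul hy)
  have hH := hg.mul (((hg.add (hz.mul hz)).add_const a))
  have hE : Ha3 a = fun q : ℝ × ℝ × ℝ =>
      (q.1 * q.1 + q.2.1 * q.2.1) * ((q.1 * q.1 + q.2.1 * q.2.1 + q.2.2 * q.2.2) + a) := by
    funext q; simp only [Ha3]; ring
  rw [hE, (show HasFDerivAt (fun q : ℝ × ℝ × ℝ =>
    (q.1 * q.1 + q.2.1 * q.2.1) * ((q.1 * q.1 + q.2.1 * q.2.1 + q.2.2 * q.2.2) + a)) _ p from hH).fderiv]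
  simp only [Vaf, ContinuousLinearMap.add_apply, ContinuousLinearMap.smul_apply,
    ContinuousLinearMap.comp_apply, ContinuousLinearMap.coe_fst', ContinuousLinearMap.coe_snd',
    smul_eq_mul, Pi.mul_apply, Pi.add_apply]
  ring
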